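/- For every u ∈ W^{1,2}(ℝ²), ∫_{ℝ²} u(e^u - 1) dx ≥ ‖u‖₂⁴ / (‖u‖₂² + √(π/2) ‖u‖_{1,2}³). -/

import Mathlib

set_option maxRecDepth 8000

open MeasureTheory

lemma key_pt (t : ℝ) : t ^ 2 / (1 + |t|) ≤ t * (Real.exp t - 1) := by
  rcases le_or_gt 0 t with h | h
  · rw [abs_of_nonneg h]
    have h1 : t + 1 ≤ Real.exp t := Real.add_one_le_exp t
    have h2 : t ^ 2 / (1 + t) ≤ t ^ 2 := by
      apply div_le_self (sq_nonneg t); linarith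
    nlinarith [sq_nonneg t]
  · rw [abs_of_neg h]
    have h1 : -t + 1 ≤ Real.exp (-t) := Real.add_one_le_exp (-t)
    have h2 : Real.exp (-t) * Real.exp t = 1 := by rw [← Real.exp_add]; simp
    have h3 : (0:ℝ) < Real.exp t := Real.exp_pos _
    rw [div_le_iff₀ (by linarith : (0:ℝ) < 1 + -t)]
    nlinarith [mul_nonneg (le_of_lt (neg_pos.2 h)) (sub_nonneg.2 h1)]

lemma abs_le_integral_abs_deriv (f : ℝ → ℝ) (hd : Differentiable ℝ f)
    (hi : Integrable f) (hi' : Integrable (deriv f)) (x : ℝ) :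
    |f x| ≤ ∫ t, |deriv f t| := by
  refine le_of_forall_pos_le_add (fun ε hε => ?_)
  obtain ⟨a, hax, hfa⟩ : ∃ a, a < x ∧ |f a| < ε := by
    by_contra hcon
    push_neg at hcon
    have hsub : Set.Iio x ⊆ {a : ℝ | ε ≤ |f a|} := fun a ha => hcon a ha
    have h1 : volume {a : ℝ | ε ≤ |f a|} < ⊤ :=
      Integrable.measure_ge_lt_top hi.abs hε
    have h2 := measure_mono (μ := (volume : Measure ℝ)) hsub
    rw [Real.volume_Iio] at h2
    exact absurd (lt_of_le_of_lt h2 h1) (lt_irrefl _)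
  have hftc : ∫ t in a..x, deriv f t = f x - f a :=
    intervalIntegral.integral_deriv_eq_sub (fun y _ => hd.differentiableAt)
      hi'.intervalIntegrable
  have h1 : |∫ t in a..x, deriv f t| ≤ ∫ t in a..x, |deriv f t| := by
    simpa using intervalIntegral.norm_integral_le_integral_norm (le_of_lt hax) (f := deriv f)
  have h2 : ∫ t in a..x, |deriv f t| ≤ ∫ t, |deriv f t| := by
    rw [intervalIntegral.integral_of_le (le_of_lt hax)]
    exact setIntegral_le_integral hi'.abs (Filter.Eventually.of_forall fun t => abs_nonneg _)
  have := abs_sub_abs_le_abs_sub (f x) (f a)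
  rw [hftc] at h1
  linarith [abs_nonneg (f x - f a)]

lemma gns_core (w : ℝ × ℝ → ℝ) (hd : Differentiable ℝ w) (hi : Integrable w)
    (h1fin : ∫⁻ p, ENNReal.ofReal |fderiv ℝ w p (1, 0)| ≠ ⊤)
    (h2fin : ∫⁻ p, ENNReal.ofReal |fderiv ℝ w p (0, 1)| ≠ ⊤) :
    ∫⁻ p, ENNReal.ofReal (w p ^ 2) ≤
      (∫⁻ p, ENNReal.ofReal |fderiv ℝ w p (1, 0)|) *
      (∫⁻ p, ENNReal.ofReal |fderiv ℝ w p (0, 1)|) := by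
  have mw : Measurable (fderiv ℝ w) := measurable_fderiv ℝ w
  have m1 : Measurable fun p : ℝ × ℝ => ENNReal.ofReal |fderiv ℝ w p (1, 0)| :=
    (((ContinuousLinearMap.apply ℝ ℝ ((1:ℝ), (0:ℝ))).continuous.measurable.comp mw).abs).ennreal_ofReal
  have m2 : Measurable fun p : ℝ × ℝ => ENNReal.ofReal |fderiv ℝ w p (0, 1)| :=
    (((ContinuousLinearMap.apply ℝ ℝ ((0:ℝ), (1:ℝ))).continuous.measurable.comp mw).abs).ennreal_ofReal
  rw [Measure.volume_eq_prod] at h1fin h2fin hi ⊢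
  set F : ℝ → ENNReal := fun y => ∫⁻ x, ENNReal.ofReal |fderiv ℝ w (x, y) (1, 0)| with hF
  set G : ℝ → ENNReal := fun x => ∫⁻ y, ENNReal.ofReal |fderiv ℝ w (x, y) (0, 1)| with hG
  have hFm : Measurable F := Measurable.lintegral_prod_left m1
  have hGm : Measurable G := Measurable.lintegral_prod_right m2
  have hFtot : ∫⁻ y, F y = ∫⁻ p : ℝ × ℝ, ENNReal.ofReal |fderiv ℝ w p (1, 0)| ∂(volume.prod volume) :=
    (lintegral_prod_symm _ m1.aemeasurable).symm
  have hGtot : ∫⁻ x, G x = ∫⁻ p : ℝ × ℝ, ENNReal.ofReal |fderiv ℝ w p (0, 1)| ∂(volume.prod volume) :=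
    (lintegral_prod _ m2.aemeasurable).symm
  have claimA : ∀ᵐ y : ℝ, ∀ x : ℝ, ENNReal.ofReal |w (x, y)| ≤ F y := by
    have hsl : ∀ᵐ y : ℝ, Integrable (fun x => w (x, y)) := hi.prod_left_ae
    have hfin : ∀ᵐ y : ℝ, F y < ⊤ := by
      apply ae_lt_top hFm
      rw [hFtot]
      exact h1fin
    filter_upwards [hsl, hfin] with y hy1 hy2
    intro x
    have hsd : ∀ s : ℝ, HasDerivAt (fun s : ℝ => w (s, y)) (fderiv ℝ w (s, y) (1, 0)) s := by
      intro s
      have h1 : HasDerivAt (fun s : ℝ => (s, y)) ((1:ℝ), (0:ℝ)) s :=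
        (hasDerivAt_id s).prodMk (hasDerivAt_const s y)
      exact (hd (s, y)).hasFDerivAt.comp_hasDerivAt s h1
    have hder : deriv (fun s : ℝ => w (s, y)) = fun s => fderiv ℝ w (s, y) (1, 0) :=
      funext fun s => (hsd s).deriv
    have hdiff_sf : Differentiable ℝ (fun s : ℝ => w (s, y)) := fun s => (hsd s).differentiableAt
    have hint' : Integrable (deriv (fun s : ℝ => w (s, y))) := by
      rw [hder]
      constructor
      · exact ((ContinuousLinearMap.apply ℝ ℝ ((1:ℝ), (0:ℝ))).continuous.measurable.comp
          (mw.comp (measurable_id.prodMk measurable_const))).aestronglyMeasurable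
      · rw [hasFiniteIntegral_iff_norm]
        have : ∀ s : ℝ, ENNReal.ofReal ‖fderiv ℝ w (s, y) (1, 0)‖ =
            ENNReal.ofReal |fderiv ℝ w (s, y) (1, 0)| := fun s => by rw [Real.norm_eq_abs]
        simp only [this]
        exact hy2
    have key := abs_le_integral_abs_deriv _ hdiff_sf hy1 hint' x
    calc ENNReal.ofReal |w (x, y)|
        ≤ ENNReal.ofReal (∫ t, |deriv (fun s : ℝ => w (s, y)) t|) := ENNReal.ofReal_le_ofReal key
      _ = ∫⁻ t, ENNReal.ofReal |deriv (fun s : ℝ => w (s, y)) t| :=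
          ofReal_integral_eq_lintegral_ofReal hint'.abs
            (Filter.Eventually.of_forall fun t => abs_nonneg _)
      _ = F y := by rw [hder]
  have claimB : ∀ᵐ x : ℝ, ∀ y : ℝ, ENNReal.ofReal |w (x, y)| ≤ G x := by
    have hsl : ∀ᵐ x : ℝ, Integrable (fun y => w (x, y)) := hi.prod_right_ae
    have hfin : ∀ᵐ x : ℝ, G x < ⊤ := by
      apply ae_lt_top hGm
      rw [hGtot]
      exact h2fin
    filter_upwards [hsl, hfin] with x hx1 hx2
    intro y
    have hsd : ∀ t : ℝ, HasDerivAt (fun t : ℝ => w (x, t)) (fderiv ℝ w (x, t) (0, 1)) t := by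
      intro t
      have h1 : HasDerivAt (fun t : ℝ => (x, t)) ((0:ℝ), (1:ℝ)) t :=
        (hasDerivAt_const t x).prodMk (hasDerivAt_id t)
      exact (hd (x, t)).hasFDerivAt.comp_hasDerivAt t h1
    have hder : deriv (fun t : ℝ => w (x, t)) = fun t => fderiv ℝ w (x, t) (0, 1) :=
      funext fun t => (hsd t).deriv
    have hdiff_sf : Differentiable ℝ (fun t : ℝ => w (x, t)) := fun t => (hsd t).differentiableAt
    have hint' : Integrable (deriv (fun t : ℝ => w (x, t))) := by
      rw [hder]
      constructor
      · exact ((ContinuousLinearMap.apply ℝ ℝ ((0:ℝ), (1:ℝ))).continuous.measurable.comp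
          (mw.comp (measurable_const.prodMk measurable_id))).aestronglyMeasurable
      · rw [hasFiniteIntegral_iff_norm]
        have : ∀ t : ℝ, ENNReal.ofReal ‖fderiv ℝ w (x, t) (0, 1)‖ =
            ENNReal.ofReal |fderiv ℝ w (x, t) (0, 1)| := fun t => by rw [Real.norm_eq_abs]
        simp only [this]
        exact hx2
    have key := abs_le_integral_abs_deriv _ hdiff_sf hx1 hint' y
    calc ENNReal.ofReal |w (x, y)|
        ≤ ENNReal.ofReal (∫ t, |deriv (fun t : ℝ => w (x, t)) t|) := ENNReal.ofReal_le_ofReal key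
      _ = ∫⁻ t, ENNReal.ofReal |deriv (fun t : ℝ => w (x, t)) t| :=
          ofReal_integral_eq_lintegral_ofReal hint'.abs
            (Filter.Eventually.of_forall fun t => abs_nonneg _)
      _ = G x := by rw [hder]
  have hcombA : ∀ᵐ p : ℝ × ℝ ∂(volume.prod volume), ∀ x, ENNReal.ofReal |w (x, p.2)| ≤ F p.2 :=
    Measure.quasiMeasurePreserving_snd.ae claimA
  have hcombB : ∀ᵐ p : ℝ × ℝ ∂(volume.prod volume), ∀ y, ENNReal.ofReal |w (p.1, y)| ≤ G p.1 :=
    Measure.quasiMeasurePreserving_fst.ae claimB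
  have hpt : ∀ᵐ p : ℝ × ℝ ∂(volume.prod volume), ENNReal.ofReal (w p ^ 2) ≤ F p.2 * G p.1 := by
    filter_upwards [hcombA, hcombB] with p h1 h2
    have heq : ENNReal.ofReal (w p ^ 2) = ENNReal.ofReal |w p| * ENNReal.ofReal |w p| := by
      rw [← ENNReal.ofReal_mul (abs_nonneg _), abs_mul_abs_self, sq]
    rw [heq]
    have e1 : ENNReal.ofReal |w p| ≤ F p.2 := by simpa using h1 p.1
    have e2 : ENNReal.ofReal |w p| ≤ G p.1 := by simpa using h2 p.2
    exact mul_le_mul' e1 e2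
  calc ∫⁻ p : ℝ × ℝ, ENNReal.ofReal (w p ^ 2) ∂(volume.prod volume)
      ≤ ∫⁻ p : ℝ × ℝ, F p.2 * G p.1 ∂(volume.prod volume) := lintegral_mono_ae hpt
    _ = ∫⁻ p : ℝ × ℝ, G p.1 * F p.2 ∂(volume.prod volume) := by
        congr 1; funext p; rw [mul_comm]
    _ = (∫⁻ x, G x) * (∫⁻ y, F y) := lintegral_prod_mul hGm.aemeasurable hFm.aemeasurable
    _ = _ := by rw [hFtot, hGtot, mul_comm]

lemma lintegral_CS {α : Type*} [MeasurableSpace α] {μ : Measure α} (f g : α → ℝ)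
    (hf : AEMeasurable f μ) (hg : AEMeasurable g μ)
    (hf0 : ∀ x, 0 ≤ f x) (hg0 : ∀ x, 0 ≤ g x) :
    (∫⁻ x, ENNReal.ofReal (f x * g x) ∂μ) ^ 2 ≤
      (∫⁻ x, ENNReal.ofReal (f x ^ 2) ∂μ) * (∫⁻ x, ENNReal.ofReal (g x ^ 2) ∂μ) := by
  have hconj : Real.HolderConjugate 2 2 := Real.HolderConjugate.two_two
  have h := ENNReal.lintegral_mul_le_Lp_mul_Lq μ hconj
    (hf.ennreal_ofReal) (hg.ennreal_ofReal)
  have h1 : ∀ x, ((fun x => ENNReal.ofReal (f x)) * fun x => ENNReal.ofReal (g x)) x =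
      ENNReal.ofReal (f x * g x) := fun x => by
    simp [ENNReal.ofReal_mul (hf0 x)]
  have h2 : ∀ x, ENNReal.ofReal (f x) ^ (2:ℝ) = ENNReal.ofReal (f x ^ 2) := fun x => by
    rw [ENNReal.ofReal_rpow_of_nonneg (hf0 x) (by norm_num), Real.rpow_two]
  have h3 : ∀ x, ENNReal.ofReal (g x) ^ (2:ℝ) = ENNReal.ofReal (g x ^ 2) := fun x => by
    rw [ENNReal.ofReal_rpow_of_nonneg (hg0 x) (by norm_num), Real.rpow_two]
  simp only [h1, h2, h3] at h
  calc (∫⁻ x, ENNReal.ofReal (f x * g x) ∂μ) ^ 2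
      ≤ ((∫⁻ x, ENNReal.ofReal (f x ^ 2) ∂μ) ^ (1/(2:ℝ)) *
         (∫⁻ x, ENNReal.ofReal (g x ^ 2) ∂μ) ^ (1/(2:ℝ))) ^ 2 := by
        exact pow_le_pow_left' h 2
    _ = (∫⁻ x, ENNReal.ofReal (f x ^ 2) ∂μ) * (∫⁻ x, ENNReal.ofReal (g x ^ 2) ∂μ) := by
        rw [mul_pow, ← ENNReal.rpow_natCast (_ ^ (1/(2:ℝ))) 2, ← ENNReal.rpow_natCast (_ ^ (1/(2:ℝ))) 2,
          ← ENNReal.rpow_mul, ← ENNReal.rpow_mul]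
        norm_num

noncomputable def psiMap : (ℝ × ℝ) →L[ℝ] EuclideanSpace ℝ (Fin 2) :=
  (ContinuousLinearMap.fst ℝ ℝ ℝ).smulRight (EuclideanSpace.single 0 1) +
  (ContinuousLinearMap.snd ℝ ℝ ℝ).smulRight (EuclideanSpace.single 1 1)

lemma psiMap_eq (p : ℝ × ℝ) :
    psiMap p = (MeasurableEquiv.toLp 2 (Fin 2 → ℝ))
      (MeasurableEquiv.finTwoArrow.symm p) := by
  have h : (MeasurableEquiv.toLp 2 (Fin 2 → ℝ))
      (MeasurableEquiv.finTwoArrow.symm p) = (WithLp.equiv 2 (Fin 2 → ℝ)).symm ![p.1, p.2] := by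
    rfl
  rw [h]
  ext i
  fin_cases i <;>
    simp [psiMap, ContinuousLinearMap.smulRight_apply, ContinuousLinearMap.add_apply,
      WithLp.equiv_symm_apply, EuclideanSpace.single_apply, PiLp.add_apply, PiLp.smul_apply]

lemma psiMap_measurePreserving : MeasurePreserving (fun p : ℝ × ℝ => psiMap p) volume volume := by
  have h1 : MeasurePreserving (⇑(MeasurableEquiv.toLp 2 (Fin 2 → ℝ))) volume volume :=
    (EuclideanSpace.volume_preserving_symm_measurableEquiv_toLp (Fin 2)).symm _
  have h2 : MeasurePreserving (⇑(MeasurableEquiv.finTwoArrow (α := ℝ)).symm) volume volume :=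
    (volume_preserving_finTwoArrow ℝ).symm _
  have h3 := h1.comp h2
  have : (fun p : ℝ × ℝ => psiMap p) =
      (⇑(MeasurableEquiv.toLp 2 (Fin 2 → ℝ)) ∘ ⇑(MeasurableEquiv.finTwoArrow).symm) := by
    funext p
    exact psiMap_eq p
  rw [this]
  exact h3

lemma psiMap_e1 : psiMap ((1:ℝ), (0:ℝ)) = EuclideanSpace.single (0 : Fin 2) (1:ℝ) := by
  simp [psiMap]

lemma psiMap_e2 : psiMap ((0:ℝ), (1:ℝ)) = EuclideanSpace.single (1 : Fin 2) (1:ℝ) := by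
  simp [psiMap]

lemma gns_E (v : EuclideanSpace ℝ (Fin 2) → ℝ) (hd : Differentiable ℝ v) (hi : Integrable v)
    (hfin : ∫⁻ x, ENNReal.ofReal ‖fderiv ℝ v x‖ ≠ ⊤) :
    ∫⁻ x, ENNReal.ofReal (v x ^ 2) ≤ (∫⁻ x, ENNReal.ofReal ‖fderiv ℝ v x‖) ^ 2 := by
  have mv : Measurable (fderiv ℝ v) := measurable_fderiv ℝ v
  have mnorm : Measurable fun x => ENNReal.ofReal ‖fderiv ℝ v x‖ := mv.norm.ennreal_ofReal
  set w : ℝ × ℝ → ℝ := fun p => v (psiMap p) with hw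
  have hwd : Differentiable ℝ w := hd.comp psiMap.differentiable
  have hwi : Integrable w := by
    have := (psiMap_measurePreserving.integrable_comp hi.aestronglyMeasurable).2 hi
    exact this
  have hfd : ∀ p : ℝ × ℝ, fderiv ℝ w p = (fderiv ℝ v (psiMap p)).comp (psiMap : (ℝ×ℝ) →L[ℝ] _) := by
    intro p
    rw [hw]
    rw [show (fun p : ℝ × ℝ => v (psiMap p)) = v ∘ psiMap from rfl]
    rw [fderiv_comp p (hd _) psiMap.differentiableAt, psiMap.fderiv]
  have hbound1 : ∀ p : ℝ × ℝ, |fderiv ℝ w p (1, 0)| ≤ ‖fderiv ℝ v (psiMap p)‖ := by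
    intro p
    rw [hfd p]
    calc |fderiv ℝ v (psiMap p) (psiMap (1, 0))| ≤
        ‖fderiv ℝ v (psiMap p)‖ * ‖psiMap ((1:ℝ), (0:ℝ))‖ :=
          (fderiv ℝ v (psiMap p)).le_opNorm _
      _ = ‖fderiv ℝ v (psiMap p)‖ := by
          rw [psiMap_e1, EuclideanSpace.norm_single]; simp
  have hbound2 : ∀ p : ℝ × ℝ, |fderiv ℝ w p (0, 1)| ≤ ‖fderiv ℝ v (psiMap p)‖ := by
    intro p
    rw [hfd p]
    calc |fderiv ℝ v (psiMap p) (psiMap (0, 1))| ≤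
        ‖fderiv ℝ v (psiMap p)‖ * ‖psiMap ((0:ℝ), (1:ℝ))‖ :=
          (fderiv ℝ v (psiMap p)).le_opNorm _
      _ = ‖fderiv ℝ v (psiMap p)‖ := by
          rw [psiMap_e2, EuclideanSpace.norm_single]; simp
  have htrans : ∫⁻ p : ℝ × ℝ, ENNReal.ofReal ‖fderiv ℝ v (psiMap p)‖ =
      ∫⁻ x, ENNReal.ofReal ‖fderiv ℝ v x‖ :=
    psiMap_measurePreserving.lintegral_comp mnorm
  have hle1 : ∫⁻ p : ℝ × ℝ, ENNReal.ofReal |fderiv ℝ w p (1, 0)| ≤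
      ∫⁻ x, ENNReal.ofReal ‖fderiv ℝ v x‖ := by
    rw [← htrans]
    exact lintegral_mono fun p => ENNReal.ofReal_le_ofReal (hbound1 p)
  have hle2 : ∫⁻ p : ℝ × ℝ, ENNReal.ofReal |fderiv ℝ w p (0, 1)| ≤
      ∫⁻ x, ENNReal.ofReal ‖fderiv ℝ v x‖ := by
    rw [← htrans]
    exact lintegral_mono fun p => ENNReal.ofReal_le_ofReal (hbound2 p)
  have hLHS : ∫⁻ x, ENNReal.ofReal (v x ^ 2) = ∫⁻ p : ℝ × ℝ, ENNReal.ofReal (w p ^ 2) :=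
    (psiMap_measurePreserving.lintegral_comp
      ((hd.continuous.measurable.pow_const 2).ennreal_ofReal)).symm
  rw [hLHS, sq]
  exact le_trans
    (gns_core w hwd hwi (lt_of_le_of_lt hle1 (lt_top_iff_ne_top.2 hfin)).ne
      (lt_of_le_of_lt hle2 (lt_top_iff_ne_top.2 hfin)).ne)
    (mul_le_mul' hle1 hle2)

lemma ennreal_le_of_sq_le_sq {x y : ENNReal} (h : x ^ 2 ≤ y ^ 2) : x ≤ y := by
  calc x = (x ^ 2) ^ ((1:ℝ)/2) := by
        rw [← ENNReal.rpow_natCast x 2, ← ENNReal.rpow_mul]; norm_num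
    _ ≤ (y ^ 2) ^ ((1:ℝ)/2) := ENNReal.rpow_le_rpow h (by norm_num)
    _ = y := by rw [← ENNReal.rpow_natCast y 2, ← ENNReal.rpow_mul]; norm_num

theorem exp_integral_lower_bound (u : EuclideanSpace ℝ (Fin 2) → ℝ)
    (hdiff : Differentiable ℝ u)
    (h2 : Integrable (fun x => (u x) ^ 2))
    (hg : Integrable (fun x => ‖gradient u x‖ ^ 2)) :
    ∫⁻ x, ENNReal.ofReal (u x * (Real.exp (u x) - 1))
      ≥ ENNReal.ofReal
        ((Real.sqrt (∫ x, (u x) ^ 2)) ^ 4 /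
          ((Real.sqrt (∫ x, (u x) ^ 2)) ^ 2 +
            Real.sqrt (Real.pi / 2) *
              (Real.sqrt ((∫ x, (u x) ^ 2) + ∫ x, ‖gradient u x‖ ^ 2)) ^ 3)) := by
  have hgrad : ∀ x, ‖gradient u x‖ = ‖fderiv ℝ u x‖ := fun x => by
    rw [gradient]; exact LinearIsometryEquiv.norm_map _ _
  set a := ∫ x, (u x) ^ 2 with ha
  set g := ∫ x, ‖gradient u x‖ ^ 2 with hgdef
  have ha0 : 0 ≤ a := integral_nonneg fun x => sq_nonneg _
  have hg0 : 0 ≤ g := integral_nonneg fun x => sq_nonneg _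
  have hfg_eq : (fun x => ‖gradient u x‖ ^ 2) = fun x => ‖fderiv ℝ u x‖ ^ 2 :=
    funext fun x => by rw [hgrad]
  have hg' : Integrable (fun x => ‖fderiv ℝ u x‖ ^ 2) := hfg_eq ▸ hg
  have hgint : (∫ x, ‖fderiv ℝ u x‖ ^ 2) = g := by rw [hgdef, hfg_eq]
  have mu : Measurable u := hdiff.continuous.measurable
  have mf : Measurable fun x => ‖fderiv ℝ u x‖ := (measurable_fderiv ℝ u).norm
  -- lintegral identifications
  have hL2 : ∫⁻ x, ENNReal.ofReal (u x ^ 2) = ENNReal.ofReal a :=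
    (ofReal_integral_eq_lintegral_ofReal h2
      (Filter.Eventually.of_forall fun x => sq_nonneg _)).symm
  have hLG : ∫⁻ x, ENNReal.ofReal (‖fderiv ℝ u x‖ ^ 2) = ENNReal.ofReal g := by
    rw [← hgint]
    exact (ofReal_integral_eq_lintegral_ofReal hg'
      (Filter.Eventually.of_forall fun x => sq_nonneg _)).symm
  -- step J
  set J := ∫⁻ x, ENNReal.ofReal (|u x| * ‖fderiv ℝ u x‖) with hJ
  have hJ2 : J ^ 2 ≤ ENNReal.ofReal a * ENNReal.ofReal g := by
    have h := lintegral_CS (μ := volume) (fun x => |u x|) (fun x => ‖fderiv ℝ u x‖)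
      mu.abs.aemeasurable mf.aemeasurable (fun x => abs_nonneg _) (fun x => norm_nonneg _)
    simp only [sq_abs] at h
    rwa [hL2, hLG] at h
  have hJfin : J ≠ ⊤ := by
    intro h
    rw [h] at hJ2
    have htop : ((⊤ : ENNReal)) ^ 2 = ⊤ := by simp
    rw [htop, top_le_iff] at hJ2
    exact ENNReal.mul_ne_top ENNReal.ofReal_ne_top ENNReal.ofReal_ne_top hJ2
  -- v = u^2
  have hvd : Differentiable ℝ (fun x => u x ^ 2) := by
    have : (fun x => u x ^ 2) = fun x => u x * u x := funext fun x => sq (u x)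
    rw [this]; exact hdiff.mul hdiff
  have hfdv : ∀ x, fderiv ℝ (fun x => u x ^ 2) x = (2 * u x) • fderiv ℝ u x := by
    intro x
    have h := ((hdiff x).hasFDerivAt.mul (hdiff x).hasFDerivAt)
    have heq : (fun x => u x ^ 2) = fun x => u x * u x := funext fun x => sq (u x)
    rw [heq]
    rw [show (fun x => u x * u x) = u * u from rfl, h.fderiv]
    ext y
    simp [two_mul, add_smul]
  have hnormv : ∀ x, ‖fderiv ℝ (fun x => u x ^ 2) x‖ = 2 * (|u x| * ‖fderiv ℝ u x‖) := by
    intro x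
    rw [hfdv x, norm_smul, Real.norm_eq_abs, abs_mul, abs_two]
    ring
  have hfinv : ∫⁻ x, ENNReal.ofReal ‖fderiv ℝ (fun x => u x ^ 2) x‖ = 2 * J := by
    simp only [hnormv, ENNReal.ofReal_mul (by norm_num : (0:ℝ) ≤ 2)]
    rw [lintegral_const_mul _ (f := fun x => ENNReal.ofReal (|u x| * ‖fderiv ℝ u x‖)) ((mu.abs.mul mf).ennreal_ofReal)]
    rw [ENNReal.ofReal_ofNat]
  have h2J : (2 : ENNReal) * J ≠ ⊤ := ENNReal.mul_ne_top (by simp) hJfin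
  have hQ : ∫⁻ x, ENNReal.ofReal ((u x ^ 2) ^ 2) ≤ (2 * J) ^ 2 := by
    have := gns_E (fun x => u x ^ 2) hvd h2 (by rw [hfinv]; exact h2J)
    rwa [hfinv] at this
  -- step S (L^3 bound)
  set S := ∫⁻ x, ENNReal.ofReal (|u x| ^ 3) with hS
  have hS2 : S ^ 2 ≤ ENNReal.ofReal a * ∫⁻ x, ENNReal.ofReal ((u x ^ 2) ^ 2) := by
    have h := lintegral_CS (μ := volume) (fun x => |u x|) (fun x => u x ^ 2)
      mu.abs.aemeasurable (mu.pow_const 2).aemeasurable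
      (fun x => abs_nonneg _) (fun x => sq_nonneg _)
    have e1 : ∀ x : EuclideanSpace ℝ (Fin 2), |u x| * u x ^ 2 = |u x| ^ 3 := fun x => by
      rw [← sq_abs (u x)]; ring
    simp only [e1, sq_abs] at h
    rwa [hL2] at h
  have hSle : S ≤ ENNReal.ofReal (2 * a * Real.sqrt g) := by
    apply ennreal_le_of_sq_le_sq
    calc S ^ 2 ≤ ENNReal.ofReal a * ∫⁻ x, ENNReal.ofReal ((u x ^ 2) ^ 2) := hS2
      _ ≤ ENNReal.ofReal a * (2 * J) ^ 2 := mul_le_mul' le_rfl hQ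
      _ ≤ ENNReal.ofReal a * (4 * (ENNReal.ofReal a * ENNReal.ofReal g)) := by
          rw [mul_pow]
          rw [show ((2:ENNReal)) ^ 2 = 4 from by norm_num]
          exact mul_le_mul' le_rfl (mul_le_mul' le_rfl hJ2)
      _ = ENNReal.ofReal (a * (4 * (a * g))) := by
          rw [← ENNReal.ofReal_mul ha0,
            show ((4:ENNReal)) = ENNReal.ofReal 4 from by norm_num,
            ← ENNReal.ofReal_mul (by norm_num : (0:ℝ) ≤ 4),
            ← ENNReal.ofReal_mul ha0]
      _ = ENNReal.ofReal (2 * a * Real.sqrt g) ^ 2 := by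
          rw [← ENNReal.ofReal_pow (by positivity)]
          congr 1
          rw [mul_pow, mul_pow, Real.sq_sqrt hg0]
          ring
  -- real inequality
  have hreal : 2 * a * Real.sqrt g ≤ Real.sqrt (Real.pi / 2) * (Real.sqrt (a + g)) ^ 3 := by
    have hs : Real.sqrt (a + g) ^ 2 = a + g := Real.sq_sqrt (by linarith)
    have hc : Real.sqrt (Real.pi / 2) ^ 2 = Real.pi / 2 :=
      Real.sq_sqrt (by positivity)
    have ht : Real.sqrt g ^ 2 = g := Real.sq_sqrt hg0
    have hs0 : 0 ≤ Real.sqrt (a + g) := Real.sqrt_nonneg _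
    have hc0 : 0 ≤ Real.sqrt (Real.pi / 2) := Real.sqrt_nonneg _
    have ht0 : 0 ≤ Real.sqrt g := Real.sqrt_nonneg _
    have hpi : (3 : ℝ) ≤ Real.pi := Real.pi_gt_three.le
    have key : 4 * a ^ 2 * g ≤ (Real.pi / 2) * (a + g) ^ 3 := by
      nlinarith [mul_nonneg (mul_nonneg ha0 ha0) hg0, mul_nonneg (mul_nonneg ha0 hg0) hg0,
        mul_nonneg (mul_nonneg hg0 hg0) hg0, mul_nonneg (mul_nonneg ha0 ha0) ha0,
        pow_nonneg (by linarith : (0:ℝ) ≤ a + g) 3, hpi]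
    have h2at : 0 ≤ 2 * a * Real.sqrt g := by positivity
    have hcs : 0 ≤ Real.sqrt (Real.pi / 2) * Real.sqrt (a + g) ^ 3 := by positivity
    have e1 : (2 * a * Real.sqrt g) ^ 2 = 4 * a ^ 2 * g := by
      rw [mul_pow, mul_pow, ht]; norm_num
    have e2 : (Real.sqrt (Real.pi / 2) * Real.sqrt (a + g) ^ 3) ^ 2 =
        (Real.pi / 2) * (a + g) ^ 3 := by
      rw [mul_pow, hc, show (Real.sqrt (a+g) ^ 3) ^ 2 = (Real.sqrt (a+g) ^ 2) ^ 3 from by ring,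
        hs]
    have hsq : (2 * a * Real.sqrt g) ^ 2 ≤ (Real.sqrt (Real.pi / 2) * Real.sqrt (a + g) ^ 3) ^ 2 := by
      rw [e1, e2]; exact key
    exact (pow_le_pow_iff_left₀ h2at hcs (two_ne_zero)).1 hsq
  -- Y
  set Y := ∫⁻ x, ENNReal.ofReal (u x ^ 2 * (1 + |u x|)) with hYdef
  have hY : Y = ENNReal.ofReal a + S := by
    rw [hYdef]
    have e : ∀ x : EuclideanSpace ℝ (Fin 2), ENNReal.ofReal (u x ^ 2 * (1 + |u x|)) =
        ENNReal.ofReal (u x ^ 2) + ENNReal.ofReal (|u x| ^ 3) := by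
      intro x
      rw [← ENNReal.ofReal_add (sq_nonneg _) (by positivity)]
      congr 1
      rw [← sq_abs (u x)]
      ring
    simp only [e]
    rw [lintegral_add_left ((mu.pow_const 2).ennreal_ofReal), hL2]
  set D := a + Real.sqrt (Real.pi / 2) * (Real.sqrt (a + g)) ^ 3 with hD
  have hYD : Y ≤ ENNReal.ofReal D := by
    rw [hY, hD, ENNReal.ofReal_add ha0 (by positivity)]
    exact add_le_add le_rfl (le_trans hSle (ENNReal.ofReal_le_ofReal hreal))
  -- X and main CS
  set X := ∫⁻ x, ENNReal.ofReal (u x ^ 2 / (1 + |u x|)) with hXdef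
  have hCS3 : (ENNReal.ofReal a) ^ 2 ≤ X * Y := by
    have hw : ∀ x : EuclideanSpace ℝ (Fin 2), (0:ℝ) < 1 + |u x| := fun x => by positivity
    have msq : Measurable fun x => Real.sqrt (1 + |u x|) :=
      Real.continuous_sqrt.measurable.comp (measurable_const.add mu.abs)
    have h := lintegral_CS (μ := volume) (fun x => |u x| / Real.sqrt (1 + |u x|))
      (fun x => |u x| * Real.sqrt (1 + |u x|))
      (mu.abs.div msq).aemeasurable (mu.abs.mul msq).aemeasurable
      (fun x => by positivity) (fun x => by positivity)
    have e1 : ∀ x : EuclideanSpace ℝ (Fin 2),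
        |u x| / Real.sqrt (1 + |u x|) * (|u x| * Real.sqrt (1 + |u x|)) = u x ^ 2 := by
      intro x
      have hne : Real.sqrt (1 + |u x|) ≠ 0 := by
        positivity
      field_simp
      rw [← sq_abs (u x)]
    have e2 : ∀ x : EuclideanSpace ℝ (Fin 2),
        (|u x| / Real.sqrt (1 + |u x|)) ^ 2 = u x ^ 2 / (1 + |u x|) := by
      intro x
      rw [div_pow, Real.sq_sqrt (hw x).le, sq_abs]
    have e3 : ∀ x : EuclideanSpace ℝ (Fin 2),
        (|u x| * Real.sqrt (1 + |u x|)) ^ 2 = u x ^ 2 * (1 + |u x|) := by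
      intro x
      rw [mul_pow, Real.sq_sqrt (hw x).le, sq_abs]
    simp only [e1, e2, e3] at h
    rwa [hL2] at h
  -- conclusion
  have hnum : (Real.sqrt a) ^ 4 = a ^ 2 := by
    have : (Real.sqrt a) ^ 4 = ((Real.sqrt a) ^ 2) ^ 2 := by ring
    rw [this, Real.sq_sqrt ha0]
  have hden : (Real.sqrt a) ^ 2 = a := Real.sq_sqrt ha0
  rw [ge_iff_le, hnum, hden]
  have hXD : ENNReal.ofReal (a ^ 2 / D) ≤ X := by
    rcases eq_or_lt_of_le ha0 with h0 | hapos
    · rw [← h0]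
      norm_num
    · have hDpos : 0 < D := by
        rw [hD]; positivity
      rw [ENNReal.ofReal_div_of_pos hDpos]
      apply ENNReal.div_le_of_le_mul
      calc ENNReal.ofReal (a ^ 2) = (ENNReal.ofReal a) ^ 2 := by
            rw [ENNReal.ofReal_pow ha0]
        _ ≤ X * Y := hCS3
        _ ≤ X * ENNReal.ofReal D := mul_le_mul' le_rfl hYD
  rw [← hD]
  exact le_trans hXD (lintegral_mono fun x => ENNReal.ofReal_le_ofReal (key_pt (u x)))
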